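/- Let U be a unitary n×n complex matrix all of whose entries belong to 𝔻[ω] = ℤ[1/√2, i]. Then there exists a finite sequence U₁, ..., U_h of one- and two-level unitary n×n matrices of types X, H, T, and ω such that U = U₁⋯U_h. -/

import Mathlib

noncomputable section

/-- The eighth root of unity `ω = e^{iπ/4} = (1+i)/√2`. -/
def ω : ℂ := (1 + Complex.I) / Real.sqrt 2

/-- A rational number is dyadic if it has the form `a / 2^n` with `a ∈ ℤ`, `n ∈ ℕ`. -/
def IsDyadic (q : ℚ) : Prop := ∃ (a : ℤ) (n : ℕ), q = a / 2 ^ n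

/-- Membership in the ring `𝔻[ω] = ℤ[1/√2, i]`: complex numbers of the form
`aω³ + bω² + cω + d` with `a, b, c, d` dyadic rationals. -/
def inDω (t : ℂ) : Prop :=
  ∃ a b c d : ℚ, IsDyadic a ∧ IsDyadic b ∧ IsDyadic c ∧ IsDyadic d ∧
    t = (a : ℂ) * ω ^ 3 + (b : ℂ) * ω ^ 2 + (c : ℂ) * ω + (d : ℂ)

/-- Membership in the ring `ℤ[ω]`: complex numbers of the form
`aω³ + bω² + cω + d` with `a, b, c, d ∈ ℤ`. -/
def inZω (t : ℂ) : Prop :=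
  ∃ a b c d : ℤ, t = (a : ℂ) * ω ^ 3 + (b : ℂ) * ω ^ 2 + (c : ℂ) * ω + (d : ℂ)

/-- The Hadamard gate. -/
def Hmat : Matrix (Fin 2) (Fin 2) ℂ := ((Real.sqrt 2 : ℂ))⁻¹ • !![1, 1; 1, -1]

/-- The phase gate `S`. -/
def Smat : Matrix (Fin 2) (Fin 2) ℂ := !![1, 0; 0, Complex.I]

/-- The `T` gate. -/
def Tmat : Matrix (Fin 2) (Fin 2) ℂ := !![1, 0; 0, ω]

/-- The `X` (not) gate. -/
def Xmat : Matrix (Fin 2) (Fin 2) ℂ := !![0, 1; 1, 0]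

/-- The controlled-not gate, as a matrix on two qubits: it sends `|a,b⟩` to `|a, a+b⟩`. -/
def CNOTmat : Matrix (Fin 2 × Fin 2) (Fin 2 × Fin 2) ℂ :=
  Matrix.of fun p q => if p.1 = q.1 ∧ p.2 = q.1 + q.2 then 1 else 0

/-- The one-level `n×n` matrix `a_[j]` of type `a`: the identity except that the `(j,j)`
entry is `a`. -/
def oneLevel {n : ℕ} (a : ℂ) (j : Fin n) : Matrix (Fin n) (Fin n) ℂ :=
  Matrix.of fun p q => if p = q then (if p = j then a else 1) else 0

/-- The two-level `n×n` matrix `U_[j,l]` of type `U`: the identity except that the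
`(j,j), (j,l), (l,j), (l,l)` entries are those of the `2×2` matrix `U`. -/
def twoLevel {n : ℕ} (U : Matrix (Fin 2) (Fin 2) ℂ) (j l : Fin n) :
    Matrix (Fin n) (Fin n) ℂ :=
  Matrix.of fun p q =>
    if p = j ∧ q = j then U 0 0
    else if p = j ∧ q = l then U 0 1
    else if p = l ∧ q = j then U 1 0
    else if p = l ∧ q = l then U 1 1
    else if p = q then 1 else 0

/-- A one- or two-level matrix of type `X`, `H`, `T` (two-level) or `ω` (one-level). -/
def IsLevelGen {n : ℕ} (M : Matrix (Fin n) (Fin n) ℂ) : Prop :=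
  (∃ j l : Fin n, j ≠ l ∧
      (M = twoLevel Xmat j l ∨ M = twoLevel Hmat j l ∨ M = twoLevel Tmat j l))
  ∨ (∃ j : Fin n, M = oneLevel ω j)


lemma sqrt2_ne : (Real.sqrt 2 : ℂ) ≠ 0 := by
  simp only [ne_eq, Complex.ofReal_eq_zero]
  positivity

lemma sqrt2_sq : (Real.sqrt 2 : ℂ) ^ 2 = 2 := by
  rw [← Complex.ofReal_pow, Real.sq_sqrt (by norm_num : (2:ℝ) ≥ 0)]
  norm_num

lemma omega_sq : ω ^ 2 = Complex.I := by
  unfold ω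
  rw [div_pow]
  rw [sqrt2_sq]
  have : (1 + Complex.I)^2 = 2 * Complex.I := by
    have := Complex.I_sq
    ring_nf
    rw [Complex.I_sq]; ring
  rw [this]; ring

lemma omega_pow4 : ω ^ 4 = -1 := by
  have : ω ^ 4 = (ω ^ 2) ^ 2 := by ring
  rw [this, omega_sq, Complex.I_sq]

lemma omega_pow8 : ω ^ 8 = 1 := by
  have : ω ^ 8 = (ω ^ 4) ^ 2 := by ring
  rw [this, omega_pow4]; ring

lemma sqrt2_eq_omega : (Real.sqrt 2 : ℂ) = ω - ω ^ 3 := by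
  have h1 : ω * (Real.sqrt 2 : ℂ) = 1 + Complex.I := by
    unfold ω; field_simp
  have h3 : ω ^ 3 = ω ^ 2 * ω := by ring
  have : ω - ω ^ 3 = ω * (1 - Complex.I) := by
    rw [h3, omega_sq]; ring
  rw [this]
  have h2 : (1 + Complex.I) * (1 - Complex.I) = 2 := by
    have := Complex.I_sq; ring_nf; rw [Complex.I_sq]; ring
  have h4 : ω * (1 - Complex.I) * (Real.sqrt 2 : ℂ) = (Real.sqrt 2:ℂ) * Real.sqrt 2 := by
    calc ω * (1 - Complex.I) * (Real.sqrt 2 : ℂ) = (ω * Real.sqrt 2) * (1 - Complex.I) := by ring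
      _ = (1 + Complex.I) * (1 - Complex.I) := by rw [h1]
      _ = 2 := h2
      _ = (Real.sqrt 2:ℂ) * Real.sqrt 2 := by rw [← sqrt2_sq]; ring
  exact (mul_right_cancel₀ sqrt2_ne h4).symm

lemma conj_omega : (starRingEnd ℂ) ω = -ω ^ 3 := by
  have h : (starRingEnd ℂ) ω = (1 - Complex.I) / Real.sqrt 2 := by
    unfold ω
    rw [map_div₀, map_add, map_one, Complex.conj_I, Complex.conj_ofReal]
    ring
  rw [h, show (-ω^3 : ℂ) = -(ω^2*ω) from by ring, omega_sq]
  rw [show (1 - Complex.I) = 1 + -Complex.I from by ring]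
  unfold ω
  rw [div_eq_iff sqrt2_ne]
  field_simp
  linear_combination Complex.I_sq

/-- Quadruples representing `a ω³ + b ω² + c ω + d ∈ ℤ[ω]`. -/
structure Zw where
  a : ℤ
  b : ℤ
  c : ℤ
  d : ℤ

namespace Zw

def toC (t : Zw) : ℂ := t.a * ω ^ 3 + t.b * ω ^ 2 + t.c * ω + t.d

def add (x y : Zw) : Zw := ⟨x.a + y.a, x.b + y.b, x.c + y.c, x.d + y.d⟩
def sub (x y : Zw) : Zw := ⟨x.a - y.a, x.b - y.b, x.c - y.c, x.d - y.d⟩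
def mul (x y : Zw) : Zw :=
  ⟨x.a * y.d + x.b * y.c + x.c * y.b + x.d * y.a,
   x.b * y.d + x.c * y.c + x.d * y.b - x.a * y.a,
   x.c * y.d + x.d * y.c - x.a * y.b - x.b * y.a,
   x.d * y.d - x.a * y.c - x.b * y.b - x.c * y.a⟩
/-- multiplication by ω -/
def w (x : Zw) : Zw := ⟨x.b, x.c, x.d, -x.a⟩
/-- multiplication by √2 -/
def s2 (x : Zw) : Zw := ⟨x.b - x.d, x.a + x.c, x.b + x.d, x.c - x.a⟩
def conj (x : Zw) : Zw := ⟨-x.c, -x.b, -x.a, x.d⟩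
def p (x : Zw) : ℤ := x.a^2 + x.b^2 + x.c^2 + x.d^2
def q (x : Zw) : ℤ := x.a*x.b + x.b*x.c + x.c*x.d - x.a*x.d

lemma toC_add (x y : Zw) : (x.add y).toC = x.toC + y.toC := by
  simp only [toC, add]; push_cast; ring

lemma toC_sub (x y : Zw) : (x.sub y).toC = x.toC - y.toC := by
  simp only [toC, sub]; push_cast; ring

lemma toC_mul (x y : Zw) : (x.mul y).toC = x.toC * y.toC := by
  simp only [toC, mul]; push_cast
  linear_combination (-((x.a:ℂ) * y.a * ω^2) - (x.a * y.b + x.b * y.a) * ω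
    - (x.a * y.c + x.b * y.b + x.c * y.a)) * omega_pow4

lemma toC_w (x : Zw) : x.w.toC = ω * x.toC := by
  have : x.w = (Zw.mk 0 0 1 0).mul x := by
    cases x; simp only [mul, w, Zw.mk.injEq]; refine ⟨by ring, by ring, by ring, by ring⟩
  rw [this, toC_mul]
  simp only [toC]; push_cast; ring

lemma toC_s2 (x : Zw) : x.s2.toC = (Real.sqrt 2 : ℂ) * x.toC := by
  have : x.s2 = (Zw.mk (-1) 0 1 0).mul x := by
    cases x; simp only [mul, s2, Zw.mk.injEq]; refine ⟨by ring, by ring, by ring, by ring⟩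
  rw [this, toC_mul, sqrt2_eq_omega]
  simp only [toC]; push_cast; ring

lemma toC_conj (x : Zw) : x.conj.toC = (starRingEnd ℂ) x.toC := by
  simp only [toC, conj, map_add, map_mul, map_pow, conj_omega, map_intCast]
  push_cast
  linear_combination ((x.a:ℂ) * ω^5 - x.a * ω - (x.b:ℂ) * ω^2) * omega_pow4

lemma normsq (x : Zw) : x.toC * (starRingEnd ℂ) x.toC = (x.p : ℂ) + (x.q : ℂ) * Real.sqrt 2 := by
  rw [← toC_conj, ← toC_mul]
  have : x.mul x.conj = ⟨-x.q, 0, x.q, x.p⟩ := by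
    cases x; simp only [mul, conj, p, q, Zw.mk.injEq]
    refine ⟨by ring, by ring, by ring, by ring⟩
  rw [this]
  simp only [toC, sqrt2_eq_omega]
  push_cast; ring

end Zw
namespace Zw

def OddT (t : Zw) : Prop := (t.a + t.b + t.c + t.d) % 2 = 1
def E2T (t : Zw) : Prop := (t.a + t.c) % 2 = 1 ∧ (t.b + t.d) % 2 = 1
def Even2 (t : Zw) : Prop := (t.a + t.c) % 2 = 0 ∧ (t.b + t.d) % 2 = 0

instance : DecidablePred OddT := fun t => by unfold OddT; infer_instance
instance : DecidablePred E2T := fun t => by unfold E2T; exact instDecidableAnd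
instance : DecidablePred Even2 := fun t => by unfold Even2; exact instDecidableAnd

lemma even2_not_oddT {t : Zw} (h : Even2 t) : ¬ OddT t := by
  unfold Even2 at h; unfold OddT; omega

lemma even2_not_e2T {t : Zw} (h : Even2 t) : ¬ E2T t := by
  unfold Even2 at h; unfold E2T; omega

lemma not_oddT_not_e2T {t : Zw} (h1 : ¬ OddT t) (h2 : ¬ E2T t) : Even2 t := by
  unfold OddT at h1; unfold E2T at h2; unfold Even2; omega

lemma sq_mod (z : ℤ) : z ^ 2 % 2 = z % 2 := by
  rcases Int.even_or_odd z with ⟨k, rfl⟩ | ⟨k, rfl⟩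
  · rw [show (k+k)^2 = 2*(2*(k*k)) from by ring, Int.mul_emod_right]; omega
  · rw [show (2*k+1)^2 = 1 + 2*(2*(k*k)+2*k) from by ring, Int.add_mul_emod_self_left]
    omega

lemma p_parity (t : Zw) : t.p % 2 = (t.a + t.b + t.c + t.d) % 2 := by
  have ha := sq_mod t.a; have hb := sq_mod t.b; have hc := sq_mod t.c; have hd := sq_mod t.d
  unfold p
  omega

lemma q_parity (t : Zw) : t.q % 2 = 1 ↔ E2T t := by
  obtain ⟨X, hX⟩ : ∃ X, t.a*t.d = X := ⟨_, rfl⟩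
  obtain ⟨P, hP⟩ : ∃ P, (t.a+t.c)*(t.b+t.d) = P := ⟨_, rfl⟩
  have h : P = t.q + 2*X := by rw [← hX, ← hP]; unfold q; ring
  have h2 : P % 2 = ((t.a+t.c) % 2) * ((t.b+t.d) % 2) % 2 := by
    rw [← hP]; exact Int.mul_emod _ _ 2
  unfold E2T
  rcases (by omega : (t.a+t.c) % 2 = 0 ∨ (t.a+t.c) % 2 = 1) with e1 | e1 <;>
    rcases (by omega : (t.b+t.d) % 2 = 0 ∨ (t.b+t.d) % 2 = 1) with e2 | e2 <;>
      rw [e1, e2] at h2 <;> norm_num at h2 <;> omega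

lemma p_nonneg (t : Zw) : 0 ≤ t.p := by
  unfold p; positivity

lemma toC_eq_zero_of_p (t : Zw) (h : t.p = 0) : t.toC = 0 := by
  have h4 : t.a = 0 ∧ t.b = 0 ∧ t.c = 0 ∧ t.d = 0 := by
    unfold p at h
    refine ⟨?_, ?_, ?_, ?_⟩ <;> nlinarith [sq_nonneg t.a, sq_nonneg t.b, sq_nonneg t.c, sq_nonneg t.d]
  obtain ⟨h1, h2, h3, h5⟩ := h4
  simp [toC, h1, h2, h3, h5]

lemma omega_pow5 : ω ^ 5 = -ω := by
  rw [show ω^5 = ω^4*ω from by ring, omega_pow4]; ring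
lemma omega_pow6 : ω ^ 6 = -ω^2 := by
  rw [show ω^6 = ω^4*ω^2 from by ring, omega_pow4]; ring
lemma omega_pow7 : ω ^ 7 = -ω^3 := by
  rw [show ω^7 = ω^4*ω^3 from by ring, omega_pow4]; ring

lemma unit_of_p_eq_one (t : Zw) (h : t.p = 1) : ∃ m : ℕ, t.toC = ω ^ m := by
  have sqone : ∀ z : ℤ, z^2 = 1 → z = 1 ∨ z = -1 := by
    intro z hz
    have h0 : (z-1)*(z+1) = 0 := by linear_combination hz
    rcases mul_eq_zero.mp h0 with h' | h' <;> [left; right] <;> omega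
  have sqzero : ∀ z : ℤ, z^2 = 0 → z = 0 := by
    intro z hz; nlinarith [sq_nonneg z]
  obtain ⟨A, hA⟩ : ∃ A, t.a^2 = A := ⟨_, rfl⟩
  obtain ⟨B, hB⟩ : ∃ B, t.b^2 = B := ⟨_, rfl⟩
  obtain ⟨C, hC⟩ : ∃ C, t.c^2 = C := ⟨_, rfl⟩
  obtain ⟨D, hD⟩ : ∃ D, t.d^2 = D := ⟨_, rfl⟩
  have hp : A + B + C + D = 1 := by unfold p at h; omega
  have hA0 : 0 ≤ A := hA ▸ sq_nonneg _
  have hB0 : 0 ≤ B := hB ▸ sq_nonneg _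
  have hC0 : 0 ≤ C := hC ▸ sq_nonneg _
  have hD0 : 0 ≤ D := hD ▸ sq_nonneg _
  have hcases : (A = 1 ∧ B = 0 ∧ C = 0 ∧ D = 0) ∨ (B = 1 ∧ A = 0 ∧ C = 0 ∧ D = 0)
      ∨ (C = 1 ∧ A = 0 ∧ B = 0 ∧ D = 0) ∨ (D = 1 ∧ A = 0 ∧ B = 0 ∧ C = 0) := by omega
  rcases hcases with ⟨h1,h2,h3,h4⟩ | ⟨h1,h2,h3,h4⟩ | ⟨h1,h2,h3,h4⟩ | ⟨h1,h2,h3,h4⟩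
  · have hb := sqzero _ (hB ▸ h2); have hc := sqzero _ (hC ▸ h3); have hd := sqzero _ (hD ▸ h4)
    rcases sqone _ (hA ▸ h1) with ha | ha
    · exact ⟨3, by simp [toC, ha, hb, hc, hd]⟩
    · exact ⟨7, by simp [toC, ha, hb, hc, hd, omega_pow7]⟩
  · have hb := sqzero _ (hA ▸ h2); have hc := sqzero _ (hC ▸ h3); have hd := sqzero _ (hD ▸ h4)
    rcases sqone _ (hB ▸ h1) with ha | ha
    · exact ⟨2, by simp [toC, ha, hb, hc, hd]⟩
    · exact ⟨6, by simp [toC, ha, hb, hc, hd, omega_pow6]⟩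
  · have hb := sqzero _ (hA ▸ h2); have hc := sqzero _ (hB ▸ h3); have hd := sqzero _ (hD ▸ h4)
    rcases sqone _ (hC ▸ h1) with ha | ha
    · exact ⟨1, by simp [toC, ha, hb, hc, hd]⟩
    · exact ⟨5, by simp [toC, ha, hb, hc, hd, omega_pow5]⟩
  · have hb := sqzero _ (hA ▸ h2); have hc := sqzero _ (hB ▸ h3); have hd := sqzero _ (hC ▸ h4)
    rcases sqone _ (hD ▸ h1) with ha | ha
    · exact ⟨0, by simp [toC, ha, hb, hc, hd]⟩
    · exact ⟨4, by simp [toC, ha, hb, hc, hd, omega_pow4]⟩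

lemma even2_s2 (t : Zw) (h : Even2 t) : ∃ s : Zw, t = s.s2 := by
  obtain ⟨h1, h2⟩ := h
  refine ⟨⟨(t.b - t.d)/2, (t.a + t.c)/2, (t.b + t.d)/2, (t.c - t.a)/2⟩, ?_⟩
  cases t with
  | mk a b c d => simp only [s2, Zw.mk.injEq, and_true, true_and] at *; omega

lemma s2_inj {x y : Zw} (h : x.s2 = y.s2) : x = y := by
  cases x; cases y
  simp only [s2, Zw.mk.injEq, and_true, true_and] at *
  omega

def wpow : ℕ → Zw → Zw
  | 0, t => t
  | (m+1), t => (wpow m t).w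

lemma toC_wpow (m : ℕ) (t : Zw) : (wpow m t).toC = ω ^ m * t.toC := by
  induction m with
  | zero => simp [wpow]
  | succ m ih => rw [wpow, toC_w, ih]; ring

lemma oddT_w (t : Zw) : OddT t.w ↔ OddT t := by
  unfold OddT w; simp only; omega

lemma oddT_wpow (m : ℕ) (t : Zw) : OddT (wpow m t) ↔ OddT t := by
  induction m with
  | zero => rfl
  | succ m ih => rw [wpow, oddT_w, ih]

lemma s2_sub (x y : Zw) : (x.sub y).s2 = (x.s2).sub (y.s2) := by
  cases x; cases y; simp only [s2, sub, Zw.mk.injEq, and_true, true_and]; omega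

lemma sub_eq_add {x y w : Zw} (h : x.sub y = w) : x = y.add w := by
  cases x; cases y; cases w; simp only [sub, add, Zw.mk.injEq, and_true, true_and] at *; omega

lemma oddT_add_iff {x u : Zw} (hu : ¬ OddT u) : (OddT (x.add u) ↔ OddT x) := by
  unfold OddT at *; unfold add; simp only; omega

lemma oddT_add_iff' {x u : Zw} (hu : OddT u) : (OddT (x.add u) ↔ ¬ OddT x) := by
  unfold OddT at *; unfold add; simp only; omega

lemma not_oddT_s2 (u : Zw) : ¬ OddT u.s2 := by
  unfold OddT s2; simp only; omega

lemma www_identity (t : Zw) : (t.w.w).sub t = (t.w.w.w).s2 := by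
  cases t; simp only [w, s2, sub, Zw.mk.injEq, and_true, true_and]; omega

lemma add_sub_sub (x u : Zw) : (x.add u).sub (x.sub u) = (u.s2).s2 := by
  cases x; cases u; simp only [add, sub, s2, Zw.mk.injEq, and_true, true_and]; omega

/-- Core pairing lemma for two odd-weight entries. -/
lemma Opair (x y : Zw) (hx : OddT x) (hy : OddT y) :
    ∃ (m : ℕ) (z₁ z₂ : Zw), x.add (wpow m y) = z₁.s2 ∧ x.sub (wpow m y) = z₂.s2 ∧
      ¬ OddT z₁ ∧ ¬ OddT z₂ := by
  obtain ⟨m₀, hme, hms⟩ : ∃ m₀ : ℕ, Even2 (x.add (wpow m₀ y)) ∧ Even2 (x.sub (wpow m₀ y)) := by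
    unfold OddT at hx hy
    by_cases hc : (x.a + x.c) % 2 = (y.a + y.c) % 2
    · refine ⟨0, ⟨?_, ?_⟩, ⟨?_, ?_⟩⟩ <;> simp only [wpow, add, sub, Even2] <;> omega
    · refine ⟨1, ⟨?_, ?_⟩, ⟨?_, ?_⟩⟩ <;> simp only [wpow, w, add, sub, Even2] <;> omega
  obtain ⟨z₁, hz₁⟩ := even2_s2 _ hme
  obtain ⟨z₂, hz₂⟩ := even2_s2 _ hms
  -- z₂'s parity equals z₁'s
  have hrel : z₁ = z₂.add ((wpow m₀ y).s2) := by
    apply sub_eq_add (y := z₂)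
    apply s2_inj
    rw [s2_sub, ← hz₁, ← hz₂, add_sub_sub]
  by_cases hodd : OddT z₁
  · -- use m₀ + 2 instead
    set u := wpow m₀ y with hu
    have hwp2 : wpow (m₀ + 2) y = u.w.w := rfl
    have hme2 : Even2 (x.add (u.w.w)) := by
      obtain ⟨e1, e2⟩ := hme
      unfold Even2 add at *; unfold w; simp only at *
      simp only [hwp2] at *
      omega
    have hms2 : Even2 (x.sub (u.w.w)) := by
      obtain ⟨e1, e2⟩ := hms
      unfold Even2 add sub at *; unfold w; simp only at *
      omega
    obtain ⟨z₁', hz₁'⟩ := even2_s2 _ hme2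
    obtain ⟨z₂', hz₂'⟩ := even2_s2 _ hms2
    have hrel' : z₁' = z₁.add (u.w.w.w) := by
      apply sub_eq_add (y := z₁)
      apply s2_inj
      rw [s2_sub, ← hz₁, ← hz₁', ← www_identity]
      cases x; cases u; simp only [add, sub, w, Zw.mk.injEq, and_true, true_and]; omega
    have huodd : OddT (u.w.w.w) := by
      rw [oddT_w, oddT_w, oddT_w, hu, oddT_wpow]; exact hy
    have hnodd1 : ¬ OddT z₁' := by
      rw [hrel', oddT_add_iff' huodd]; simp [hodd]
    have hrel2' : z₁' = z₂'.add ((u.w.w).s2) := by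
      apply sub_eq_add (y := z₂')
      apply s2_inj
      rw [s2_sub, ← hz₁', ← hz₂', add_sub_sub]
    have hnodd2 : ¬ OddT z₂' := by
      intro hc
      apply hnodd1
      rw [hrel2', oddT_add_iff (not_oddT_s2 _)]
      exact hc
    exact ⟨m₀ + 2, z₁', z₂', by rw [hwp2]; exact hz₁', by rw [hwp2]; exact hz₂', hnodd1, hnodd2⟩
  · have hnodd2 : ¬ OddT z₂ := by
      intro hc
      apply hodd
      rw [hrel, oddT_add_iff (not_oddT_s2 _)]
      exact hc
    exact ⟨m₀, z₁, z₂, hz₁, hz₂, hodd, hnodd2⟩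

lemma all_even_extract (t : Zw)
    (h4 : t.a % 2 = 0 ∧ t.b % 2 = 0 ∧ t.c % 2 = 0 ∧ t.d % 2 = 0) :
    ∃ u : Zw, t = (u.s2).s2 ∧ Even2 u.s2 := by
  refine ⟨⟨t.a/2, t.b/2, t.c/2, t.d/2⟩, ?_, ?_⟩
  · cases t; simp only [s2, Zw.mk.injEq, and_true, true_and] at *; omega
  · unfold Even2 s2; simp only; omega

/-- Core pairing lemma for two `E2`-class entries. -/
lemma E2pair (x y : Zw) (hx : E2T x) (hy : E2T y) :
    ∃ (m : ℕ) (z₁ z₂ : Zw), x.add (wpow m y) = z₁.s2 ∧ x.sub (wpow m y) = z₂.s2 ∧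
      Even2 z₁ ∧ Even2 z₂ := by
  obtain ⟨hx1, hx2⟩ := hx
  obtain ⟨hy1, hy2⟩ := hy
  obtain ⟨m, hcong⟩ : ∃ m : ℕ, (x.a - (wpow m y).a) % 2 = 0 ∧ (x.b - (wpow m y).b) % 2 = 0 ∧
      (x.c - (wpow m y).c) % 2 = 0 ∧ (x.d - (wpow m y).d) % 2 = 0 := by
    by_cases hs : (x.a + x.b) % 2 = (y.a + y.b) % 2
    · by_cases h0 : x.a % 2 = y.a % 2
      · exact ⟨0, by simp only [wpow]; omega⟩
      · exact ⟨2, by simp only [wpow, w]; omega⟩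
    · by_cases h0 : x.a % 2 = y.b % 2
      · exact ⟨1, by simp only [wpow, w]; omega⟩
      · exact ⟨3, by simp only [wpow, w]; omega⟩
  obtain ⟨u₁, hu₁, he₁⟩ := all_even_extract (x.add (wpow m y)) (by
    obtain ⟨c1, c2, c3, c4⟩ := hcong
    unfold add; simp only
    omega)
  obtain ⟨u₂, hu₂, he₂⟩ := all_even_extract (x.sub (wpow m y)) (by
    obtain ⟨c1, c2, c3, c4⟩ := hcong
    unfold sub; simp only
    omega)
  exact ⟨m, u₁.s2, u₂.s2, hu₁, hu₂, he₁, he₂⟩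

end Zw
section MatrixPart

open Matrix

variable {n : ℕ}

lemma twoLevel_apply_jq (U : Matrix (Fin 2) (Fin 2) ℂ) (j l q : Fin n) (hjl : j ≠ l) :
    twoLevel U j l j q = if q = j then U 0 0 else if q = l then U 0 1 else 0 := by
  by_cases h1 : q = j
  · subst h1; simp [twoLevel]
  · by_cases h2 : q = l
    · subst h2; simp [twoLevel, hjl, Ne.symm hjl]
    · simp [twoLevel, h1, h2, Ne.symm h1, Ne.symm h2, Ne.symm hjl]

lemma twoLevel_apply_lq (U : Matrix (Fin 2) (Fin 2) ℂ) (j l q : Fin n) (hjl : j ≠ l) :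
    twoLevel U j l l q = if q = j then U 1 0 else if q = l then U 1 1 else 0 := by
  by_cases h1 : q = j
  · subst h1; simp [twoLevel, Ne.symm hjl, hjl]
  · by_cases h2 : q = l
    · subst h2; simp [twoLevel, hjl, Ne.symm hjl]
    · simp [twoLevel, h1, h2, Ne.symm h1, Ne.symm h2, Ne.symm hjl]

lemma twoLevel_apply_other (U : Matrix (Fin 2) (Fin 2) ℂ) (j l p q : Fin n)
    (hpj : p ≠ j) (hpl : p ≠ l) :
    twoLevel U j l p q = if p = q then 1 else 0 := by
  simp [twoLevel, hpj, hpl]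

lemma twoLevel_mulVec (U : Matrix (Fin 2) (Fin 2) ℂ) (j l : Fin n) (hjl : j ≠ l)
    (v : Fin n → ℂ) :
    (twoLevel U j l).mulVec v = fun p =>
      if p = j then U 0 0 * v j + U 0 1 * v l
      else if p = l then U 1 0 * v j + U 1 1 * v l
      else v p := by
  funext p
  show ∑ q, twoLevel U j l p q * v q = _
  by_cases hpj : p = j
  · subst hpj
    have key : ∀ q : Fin n, twoLevel U p l p q * v q
        = (if q = p then U 0 0 * v p else 0) + (if q = l then U 0 1 * v l else 0) := by
      intro q
      rw [twoLevel_apply_jq U p l q hjl]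
      by_cases h1 : q = p
      · subst h1; simp [Ne.symm hjl, hjl]
      · by_cases h2 : q = l
        · subst h2; simp [hjl, Ne.symm hjl]
        · simp [h1, h2]
    rw [Finset.sum_congr rfl (fun q _ => key q), Finset.sum_add_distrib]
    simp [Finset.sum_ite_eq', hjl]
  · by_cases hpl : p = l
    · subst hpl
      have key : ∀ q : Fin n, twoLevel U j p p q * v q
          = (if q = j then U 1 0 * v j else 0) + (if q = p then U 1 1 * v p else 0) := by
        intro q
        rw [twoLevel_apply_lq U j p q hjl]
        by_cases h1 : q = j
        · subst h1; simp [hjl, Ne.symm hjl]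
        · by_cases h2 : q = p
          · subst h2; simp [h1]
          · simp [h1, h2]
      rw [Finset.sum_congr rfl (fun q _ => key q), Finset.sum_add_distrib]
      simp [Finset.sum_ite_eq', hpj, Ne.symm hjl]
    · have key : ∀ q : Fin n, twoLevel U j l p q * v q
          = if q = p then v p else 0 := by
        intro q
        rw [twoLevel_apply_other U j l p q hpj hpl]
        by_cases h1 : q = p
        · subst h1; simp
        · rw [if_neg (fun h : p = q => h1 h.symm), if_neg h1, zero_mul]
      rw [Finset.sum_congr rfl (fun q _ => key q)]
      simp [Finset.sum_ite_eq', hpj, hpl]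

lemma oneLevel_apply (a : ℂ) (j p q : Fin n) :
    oneLevel a j p q = if p = q then (if p = j then a else 1) else 0 := rfl

lemma oneLevel_mulVec (a : ℂ) (j : Fin n) (v : Fin n → ℂ) :
    (oneLevel a j).mulVec v = fun p => if p = j then a * v j else v p := by
  funext p
  show ∑ q, oneLevel a j p q * v q = _
  have key : ∀ q : Fin n, oneLevel a j p q * v q
      = if q = p then (if p = j then a * v j else v p) else 0 := by
    intro q
    rw [oneLevel_apply]
    by_cases h1 : q = p
    · subst h1
      by_cases h2 : q = j
      · subst h2; simp
      · simp [h2]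
    · rw [if_neg (fun h : p = q => h1 h.symm), if_neg h1, zero_mul]
  rw [Finset.sum_congr rfl (fun q _ => key q)]
  simp [Finset.sum_ite_eq']

lemma mul_apply_col (M N : Matrix (Fin n) (Fin n) ℂ) (p q : Fin n) :
    (M * N) p q = M.mulVec (fun r => N r q) p := by
  rw [Matrix.mul_apply]
  rfl

lemma twoLevel_mul (A B : Matrix (Fin 2) (Fin 2) ℂ) (j l : Fin n) (hjl : j ≠ l) :
    twoLevel A j l * twoLevel B j l = twoLevel (A * B) j l := by
  ext p q
  rw [mul_apply_col]
  simp only [twoLevel_mulVec _ _ _ hjl]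
  by_cases hpj : p = j
  · subst hpj
    rw [if_pos rfl, twoLevel_apply_jq _ _ _ _ hjl, twoLevel_apply_jq _ _ _ _ hjl,
      twoLevel_apply_lq _ _ _ _ hjl]
    by_cases h1 : q = p
    · subst h1; simp [Matrix.mul_apply, Fin.sum_univ_two]
    · by_cases h2 : q = l
      · subst h2; simp [h1, Matrix.mul_apply, Fin.sum_univ_two]
      · simp [h1, h2]
  · by_cases hpl : p = l
    · subst hpl
      rw [if_neg hpj, if_pos rfl, twoLevel_apply_lq _ _ _ _ hjl,
        twoLevel_apply_jq _ _ _ _ hjl, twoLevel_apply_lq _ _ _ _ hjl]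
      by_cases h1 : q = j
      · subst h1; simp [Matrix.mul_apply, Fin.sum_univ_two, hjl, Ne.symm hjl]
      · by_cases h2 : q = p
        · subst h2; simp [h1, Matrix.mul_apply, Fin.sum_univ_two, hjl, Ne.symm hjl]
        · simp [h1, h2]
    · rw [if_neg hpj, if_neg hpl, twoLevel_apply_other _ _ _ _ _ hpj hpl,
        twoLevel_apply_other _ _ _ _ _ hpj hpl]

lemma twoLevel_one (j l : Fin n) (hjl : j ≠ l) :
    twoLevel (1 : Matrix (Fin 2) (Fin 2) ℂ) j l = 1 := by
  ext p q
  by_cases hpj : p = j <;> by_cases hpl : p = l <;> by_cases hqj : q = j <;> by_cases hql : q = l <;>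
    simp_all [twoLevel, Matrix.one_apply, eq_comm] <;> tauto

lemma oneLevel_mul (a b : ℂ) (j : Fin n) :
    oneLevel a j * oneLevel b j = oneLevel (a * b) j := by
  ext p q
  rw [mul_apply_col]
  simp only [oneLevel_mulVec]
  by_cases hpj : p = j <;> by_cases hqj : q = j <;> by_cases hpq : p = q <;>
    simp_all [oneLevel, eq_comm] <;> tauto

lemma oneLevel_one (j : Fin n) : oneLevel (1 : ℂ) j = 1 := by
  ext p q
  rw [oneLevel_apply, Matrix.one_apply]
  split_ifs <;> rfl

lemma twoLevel_conjTranspose (A : Matrix (Fin 2) (Fin 2) ℂ) (j l : Fin n) (hjl : j ≠ l) :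
    (twoLevel A j l)ᴴ = twoLevel Aᴴ j l := by
  ext p q
  rw [Matrix.conjTranspose_apply]
  by_cases hpj : p = j <;> by_cases hpl : p = l <;> by_cases hqj : q = j <;> by_cases hql : q = l <;>
    simp_all [twoLevel, Matrix.conjTranspose_apply, eq_comm] <;> tauto

lemma oneLevel_conjTranspose (a : ℂ) (j : Fin n) :
    (oneLevel a j)ᴴ = oneLevel ((starRingEnd ℂ) a) j := by
  ext p q
  rw [Matrix.conjTranspose_apply]
  by_cases hpj : p = j <;> by_cases hqj : q = j <;> by_cases hpq : p = q <;>
    simp_all [oneLevel, eq_comm] <;> tauto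

lemma Xmat_mul_self : Xmat * Xmatᴴ = 1 := by
  ext i j
  fin_cases i <;> fin_cases j <;>
    simp [Xmat, Matrix.mul_apply, Fin.sum_univ_two, Matrix.conjTranspose_apply, Matrix.one_apply]

lemma conj_omega_mul : ω * (starRingEnd ℂ) ω = 1 := by
  rw [conj_omega]; linear_combination -omega_pow4

lemma Tmat_mul_self : Tmat * Tmatᴴ = 1 := by
  ext i j
  fin_cases i <;> fin_cases j <;>
    simp [Tmat, Matrix.mul_apply, Fin.sum_univ_two, Matrix.conjTranspose_apply,
      Matrix.one_apply, conj_omega_mul]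

lemma Hmat_mul_self : Hmat * Hmatᴴ = 1 := by
  have h2 : ((Real.sqrt 2 : ℂ))⁻¹ * ((Real.sqrt 2 : ℂ))⁻¹ * 2 = 1 := by
    rw [← mul_inv]
    rw [show (Real.sqrt 2:ℂ) * (Real.sqrt 2:ℂ) = (Real.sqrt 2:ℂ)^2 from by ring, sqrt2_sq]
    norm_num
  have hconj : (starRingEnd ℂ) ((Real.sqrt 2 : ℂ))⁻¹ = ((Real.sqrt 2 : ℂ))⁻¹ := by
    rw [← Complex.ofReal_inv, Complex.conj_ofReal]
  ext i j
  fin_cases i <;> fin_cases j <;>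
    simp [Hmat, Matrix.mul_apply, Fin.sum_univ_two, Matrix.conjTranspose_apply,
      Matrix.one_apply, Matrix.smul_apply, hconj, smul_eq_mul] <;>
    linear_combination h2

lemma gen_unitary {M : Matrix (Fin n) (Fin n) ℂ} (h : IsLevelGen M) :
    M ∈ Matrix.unitaryGroup (Fin n) ℂ := by
  rw [Matrix.mem_unitaryGroup_iff]
  rcases h with ⟨j, l, hjl, hM | hM | hM⟩ | ⟨j, hM⟩
  · subst hM
    rw [show star (twoLevel Xmat j l) = (twoLevel Xmat j l)ᴴ from rfl,
      twoLevel_conjTranspose _ _ _ hjl, twoLevel_mul _ _ _ _ hjl, Xmat_mul_self,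
      twoLevel_one _ _ hjl]
  · subst hM
    rw [show star (twoLevel Hmat j l) = (twoLevel Hmat j l)ᴴ from rfl,
      twoLevel_conjTranspose _ _ _ hjl, twoLevel_mul _ _ _ _ hjl, Hmat_mul_self,
      twoLevel_one _ _ hjl]
  · subst hM
    rw [show star (twoLevel Tmat j l) = (twoLevel Tmat j l)ᴴ from rfl,
      twoLevel_conjTranspose _ _ _ hjl, twoLevel_mul _ _ _ _ hjl, Tmat_mul_self,
      twoLevel_one _ _ hjl]
  · subst hM
    rw [show star (oneLevel ω j) = (oneLevel ω j)ᴴ from rfl,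
      oneLevel_conjTranspose, oneLevel_mul, conj_omega_mul, oneLevel_one]

lemma norm_mulVec {M : Matrix (Fin n) (Fin n) ℂ} (hM : M ∈ Matrix.unitaryGroup (Fin n) ℂ)
    (v : Fin n → ℂ) :
    ∑ i, (M.mulVec v) i * (starRingEnd ℂ) ((M.mulVec v) i)
      = ∑ i, v i * (starRingEnd ℂ) (v i) := by
  have h1 : Mᴴ * M = 1 := Matrix.mem_unitaryGroup_iff'.mp hM
  have key : ∀ w : Fin n → ℂ, ∑ i, w i * (starRingEnd ℂ) (w i) = w ⬝ᵥ star w := by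
    intro w; rfl
  rw [key, key]
  rw [dotProduct_comm, Matrix.star_mulVec, Matrix.dotProduct_mulVec,
    Matrix.vecMul_vecMul, h1, Matrix.vecMul_one, dotProduct_comm]

end MatrixPart
section Glue

open Matrix

variable {n : ℕ}

namespace Zw

def s2pow : ℕ → Zw → Zw
  | 0, t => t
  | (m+1), t => (s2pow m t).s2

lemma toC_s2pow (m : ℕ) (t : Zw) : (s2pow m t).toC = (Real.sqrt 2 : ℂ) ^ m * t.toC := by
  induction m with
  | zero => simp [s2pow]
  | succ m ih => rw [s2pow, toC_s2, ih]; ring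

end Zw

def inD2 (z : ℂ) : Prop := ∃ (k : ℕ) (t : Zw), (Real.sqrt 2 : ℂ) ^ k * z = t.toC

lemma inD2_toC (t : Zw) : inD2 t.toC := ⟨0, t, by simp⟩

lemma inD2_zero : inD2 0 := ⟨0, ⟨0,0,0,0⟩, by simp [Zw.toC]⟩

lemma inD2_one : inD2 1 := ⟨0, ⟨0,0,0,1⟩, by simp [Zw.toC]⟩

lemma inD2_omega : inD2 ω := ⟨0, ⟨0,0,1,0⟩, by simp [Zw.toC]⟩

lemma inD2_neg_one : inD2 (-1) := ⟨0, ⟨0,0,0,-1⟩, by simp [Zw.toC]⟩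

lemma inD2_inv_sqrt2 : inD2 ((Real.sqrt 2 : ℂ))⁻¹ := by
  refine ⟨1, ⟨0,0,0,1⟩, ?_⟩
  rw [show (Zw.mk 0 0 0 1).toC = 1 from by simp [Zw.toC], pow_one,
    mul_inv_cancel₀ sqrt2_ne]

lemma inD2_neg_inv_sqrt2 : inD2 (-((Real.sqrt 2 : ℂ))⁻¹) := by
  refine ⟨1, ⟨0,0,0,-1⟩, ?_⟩
  rw [show (Zw.mk 0 0 0 (-1)).toC = -1 from by simp [Zw.toC], pow_one, mul_neg,
    mul_inv_cancel₀ sqrt2_ne]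

lemma inD2_add {x y : ℂ} (hx : inD2 x) (hy : inD2 y) : inD2 (x + y) := by
  obtain ⟨k1, t1, h1⟩ := hx
  obtain ⟨k2, t2, h2⟩ := hy
  refine ⟨k1 + k2, (Zw.s2pow k2 t1).add (Zw.s2pow k1 t2), ?_⟩
  rw [Zw.toC_add, Zw.toC_s2pow, Zw.toC_s2pow, ← h1, ← h2, pow_add]
  ring

lemma inD2_mul {x y : ℂ} (hx : inD2 x) (hy : inD2 y) : inD2 (x * y) := by
  obtain ⟨k1, t1, h1⟩ := hx
  obtain ⟨k2, t2, h2⟩ := hy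
  refine ⟨k1 + k2, t1.mul t2, ?_⟩
  rw [Zw.toC_mul, ← h1, ← h2, pow_add]
  ring

lemma inD2_sum {s : Finset (Fin n)} {f : Fin n → ℂ} (h : ∀ i ∈ s, inD2 (f i)) :
    inD2 (∑ i ∈ s, f i) := by
  classical
  induction s using Finset.induction_on with
  | empty => simpa using inD2_zero
  | insert _ _ hx ih =>
    rw [Finset.sum_insert hx]
    exact inD2_add (h _ (Finset.mem_insert_self _ _))
      (ih (fun i hi => h i (Finset.mem_insert_of_mem hi)))

lemma dyadic_scale {a : ℚ} (h : IsDyadic a) :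
    ∃ na : ℕ, ∀ N : ℕ, na ≤ N → ∃ A : ℤ, (2:ℚ)^N * a = (A : ℚ) := by
  obtain ⟨A', na, rfl⟩ := h
  refine ⟨na, fun N hN => ⟨A' * 2^(N - na), ?_⟩⟩
  have h2 : (2:ℚ)^N = 2^(N - na) * 2^na := by
    rw [← pow_add]; congr 1; omega
  push_cast
  rw [h2]
  field_simp

lemma inDω_inD2 {z : ℂ} (h : inDω z) : inD2 z := by
  obtain ⟨a, b, c, d, ha, hb, hc, hd, rfl⟩ := h
  obtain ⟨na, fa⟩ := dyadic_scale ha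
  obtain ⟨nb, fb⟩ := dyadic_scale hb
  obtain ⟨nc, fc⟩ := dyadic_scale hc
  obtain ⟨nd, fd⟩ := dyadic_scale hd
  set N := max (max na nb) (max nc nd) with hN
  obtain ⟨A, hA⟩ := fa N (by omega)
  obtain ⟨B, hB⟩ := fb N (by omega)
  obtain ⟨C, hC⟩ := fc N (by omega)
  obtain ⟨D, hD⟩ := fd N (by omega)
  refine ⟨2 * N, ⟨A, B, C, D⟩, ?_⟩
  have hs : (Real.sqrt 2 : ℂ) ^ (2 * N) = (2 : ℂ) ^ N := by
    rw [pow_mul, sqrt2_sq]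
  rw [hs]
  have cast_eq : ∀ (x : ℚ) (X : ℤ), (2:ℚ)^N * x = (X:ℚ) → (2:ℂ)^N * (x:ℂ) = (X:ℂ) := by
    intro x X hx
    have := congrArg (fun r : ℚ => (r : ℂ)) hx
    push_cast at this ⊢
    exact this
  simp only [Zw.toC]
  rw [← cast_eq a A hA, ← cast_eq b B hB, ← cast_eq c C hC, ← cast_eq d D hD]
  ring

-- entry values of the 2x2 gates
lemma Tmat00 : Tmat 0 0 = 1 := rfl
lemma Tmat01 : Tmat 0 1 = 0 := rfl
lemma Tmat10 : Tmat 1 0 = 0 := rfl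
lemma Tmat11 : Tmat 1 1 = ω := rfl
lemma Xmat00 : Xmat 0 0 = 0 := rfl
lemma Xmat01 : Xmat 0 1 = 1 := rfl
lemma Xmat10 : Xmat 1 0 = 1 := rfl
lemma Xmat11 : Xmat 1 1 = 0 := rfl
lemma Hmat00 : Hmat 0 0 = ((Real.sqrt 2 : ℂ))⁻¹ := by simp [Hmat]
lemma Hmat01 : Hmat 0 1 = ((Real.sqrt 2 : ℂ))⁻¹ := by simp [Hmat]
lemma Hmat10 : Hmat 1 0 = ((Real.sqrt 2 : ℂ))⁻¹ := by simp [Hmat]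
lemma Hmat11 : Hmat 1 1 = -((Real.sqrt 2 : ℂ))⁻¹ := by simp [Hmat]


/-- `M` agrees with the identity on all rows and columns with index `< j`. -/
def GoodUpTo (j : ℕ) (M : Matrix (Fin n) (Fin n) ℂ) : Prop :=
  ∀ p q : Fin n, ((p:ℕ) < j ∨ (q:ℕ) < j) → M p q = if p = q then 1 else 0

lemma goodUpTo_mul_cols {j : ℕ} {M U : Matrix (Fin n) (Fin n) ℂ}
    (hM : GoodUpTo j M)
    (hU : ∀ p q : Fin n, (q:ℕ) < j → U p q = if p = q then 1 else 0) :
    ∀ p q : Fin n, (q:ℕ) < j → (M * U) p q = if p = q then 1 else 0 := by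
  intro p q hq
  rw [Matrix.mul_apply]
  have key : ∀ r : Fin n, M p r * U r q = if r = q then M p q else 0 := by
    intro r
    rw [hU r q hq]
    by_cases h1 : r = q
    · subst h1; simp
    · simp [h1]
  rw [Finset.sum_congr rfl (fun r _ => key r)]
  rw [Finset.sum_ite_eq', if_pos (Finset.mem_univ _)]
  exact hM p q (Or.inr hq)

lemma twoLevel_apply_qother (U : Matrix (Fin 2) (Fin 2) ℂ) (j l p q : Fin n)
    (hqj : q ≠ j) (hql : q ≠ l) :
    twoLevel U j l p q = if p = q then 1 else 0 := by
  simp only [twoLevel, Matrix.of_apply]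
  rw [if_neg (fun h => hqj h.2), if_neg (fun h => hql h.2),
    if_neg (fun h => hqj h.2), if_neg (fun h => hql h.2)]

lemma goodUpTo_twoLevel {j : ℕ} (A : Matrix (Fin 2) (Fin 2) ℂ) (i l : Fin n)
    (hi : j ≤ (i:ℕ)) (hl : j ≤ (l:ℕ)) :
    GoodUpTo j (twoLevel A i l) := by
  intro p q hpq
  rcases hpq with h | h
  · exact twoLevel_apply_other A i l p q
      (fun he => by rw [he] at h; omega) (fun he => by rw [he] at h; omega)
  · exact twoLevel_apply_qother A i l p q
      (fun he => by rw [he] at h; omega) (fun he => by rw [he] at h; omega)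

lemma goodUpTo_oneLevel {j : ℕ} (a : ℂ) (i : Fin n) (hi : j ≤ (i:ℕ)) :
    GoodUpTo j (oneLevel a i) := by
  intro p q hpq
  rw [oneLevel_apply]
  by_cases hpq' : p = q
  · subst hpq'
    rw [if_pos rfl, if_pos rfl, if_neg]
    intro he
    rw [he] at hpq
    omega
  · rw [if_neg hpq', if_neg hpq']

lemma cols_preserved {j : ℕ} (L : List (Matrix (Fin n) (Fin n) ℂ))
    (hL : ∀ M ∈ L, GoodUpTo j M) (U : Matrix (Fin n) (Fin n) ℂ)
    (hU : ∀ p q : Fin n, (q:ℕ) < j → U p q = if p = q then 1 else 0) :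
    ∀ p q : Fin n, (q:ℕ) < j → (L.prod * U) p q = if p = q then 1 else 0 := by
  induction L with
  | nil => simpa using hU
  | cons M L ih =>
    rw [List.prod_cons, mul_assoc]
    exact goodUpTo_mul_cols (hL M List.mem_cons_self)
      (ih (fun N hN => hL N (List.mem_cons_of_mem _ hN)))

lemma listProd_unitary (L : List (Matrix (Fin n) (Fin n) ℂ))
    (h : ∀ M ∈ L, IsLevelGen M) : L.prod ∈ Matrix.unitaryGroup (Fin n) ℂ :=
  Submonoid.list_prod_mem _ (fun M hM => gen_unitary (h M hM))

lemma gen_entries {M : Matrix (Fin n) (Fin n) ℂ} (h : IsLevelGen M) :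
    ∀ p q, inD2 (M p q) := by
  have hX : ∀ i j : Fin 2, inD2 (Xmat i j) := by
    intro i j
    fin_cases i <;> fin_cases j
    · exact Xmat00 ▸ inD2_zero
    · exact Xmat01 ▸ inD2_one
    · exact Xmat10 ▸ inD2_one
    · exact Xmat11 ▸ inD2_zero
  have hH : ∀ i j : Fin 2, inD2 (Hmat i j) := by
    intro i j
    fin_cases i <;> fin_cases j
    · exact Hmat00 ▸ inD2_inv_sqrt2
    · exact Hmat01 ▸ inD2_inv_sqrt2
    · exact Hmat10 ▸ inD2_inv_sqrt2
    · exact Hmat11 ▸ inD2_neg_inv_sqrt2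
  have hT : ∀ i j : Fin 2, inD2 (Tmat i j) := by
    intro i j
    fin_cases i <;> fin_cases j
    · exact Tmat00 ▸ inD2_one
    · exact Tmat01 ▸ inD2_zero
    · exact Tmat10 ▸ inD2_zero
    · exact Tmat11 ▸ inD2_omega
  have htwo : ∀ (G : Matrix (Fin 2) (Fin 2) ℂ), (∀ i j : Fin 2, inD2 (G i j)) →
      ∀ (j l : Fin n) (p q : Fin n), inD2 (twoLevel G j l p q) := by
    intro G hG j l p q
    simp only [twoLevel, Matrix.of_apply]
    split_ifs <;> first | exact hG _ _ | exact inD2_one | exact inD2_zero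
  intro p q
  rcases h with ⟨j, l, hjl, hM | hM | hM⟩ | ⟨j, hM⟩
  · subst hM; exact htwo _ hX _ _ _ _
  · subst hM; exact htwo _ hH _ _ _ _
  · subst hM; exact htwo _ hT _ _ _ _
  · subst hM
    rw [oneLevel_apply]
    split_ifs
    · exact inD2_omega
    · exact inD2_one
    · exact inD2_zero

lemma mul_entries {M N : Matrix (Fin n) (Fin n) ℂ}
    (hM : ∀ p q, inD2 (M p q)) (hN : ∀ p q, inD2 (N p q)) :
    ∀ p q, inD2 ((M * N) p q) := by
  intro p q
  rw [Matrix.mul_apply]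
  exact inD2_sum (fun r _ => inD2_mul (hM p r) (hN r q))

lemma listProd_entries (L : List (Matrix (Fin n) (Fin n) ℂ))
    (h : ∀ M ∈ L, IsLevelGen M) (U : Matrix (Fin n) (Fin n) ℂ)
    (hU : ∀ p q, inD2 (U p q)) : ∀ p q, inD2 ((L.prod * U) p q) := by
  induction L with
  | nil => simpa using hU
  | cons M L ih =>
    rw [List.prod_cons, mul_assoc]
    exact mul_entries (gen_entries (h M List.mem_cons_self))
      (ih (fun N hN => h N (List.mem_cons_of_mem _ hN)))

lemma Xswap_mulVec (j l : Fin n) (hjl : j ≠ l) (v : Fin n → ℂ) :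
    (twoLevel Xmat j l).mulVec v
      = fun p => if p = j then v l else if p = l then v j else v p := by
  rw [twoLevel_mulVec _ _ _ hjl]
  funext p
  by_cases h1 : p = j <;> by_cases h2 : p = l <;>
    simp [h1, h2, Xmat00, Xmat01, Xmat10, Xmat11]

lemma Hstep_mulVec (j l : Fin n) (hjl : j ≠ l) (v : Fin n → ℂ) :
    (twoLevel Hmat j l).mulVec v
      = fun p => if p = j then ((Real.sqrt 2 : ℂ))⁻¹ * (v j + v l)
          else if p = l then ((Real.sqrt 2 : ℂ))⁻¹ * (v j - v l) else v p := by
  rw [twoLevel_mulVec _ _ _ hjl]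
  funext p
  by_cases h1 : p = j <;> by_cases h2 : p = l <;>
    simp [h1, h2, Hmat00, Hmat01, Hmat10, Hmat11] <;> ring

lemma replicate_T_mulVec (m : ℕ) (j l : Fin n) (hjl : j ≠ l) (v : Fin n → ℂ) :
    ((List.replicate m (twoLevel Tmat j l)).prod).mulVec v
      = fun p => if p = l then ω ^ m * v l else v p := by
  induction m with
  | zero =>
    simp only [List.replicate, List.prod_nil, Matrix.one_mulVec]
    funext p
    by_cases h : p = l
    · subst h; simp
    · simp [h]
  | succ m ih =>
    rw [List.replicate_succ, List.prod_cons, ← Matrix.mulVec_mulVec, ih,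
      twoLevel_mulVec _ _ _ hjl]
    funext p
    by_cases h1 : p = j <;> by_cases h2 : p = l <;>
      simp [h1, h2, hjl, Ne.symm hjl, Tmat00, Tmat01, Tmat10, Tmat11, pow_succ] <;>
      first | ring | (exact absurd (h1 ▸ h2 : j = l) hjl)

lemma replicate_omega_mulVec (m : ℕ) (j : Fin n) (v : Fin n → ℂ) :
    ((List.replicate m (oneLevel ω j)).prod).mulVec v
      = fun p => if p = j then ω ^ m * v j else v p := by
  induction m with
  | zero =>
    simp only [List.replicate, List.prod_nil, Matrix.one_mulVec]
    funext p
    by_cases h : p = j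
    · subst h; simp
    · simp [h]
  | succ m ih =>
    rw [List.replicate_succ, List.prod_cons, ← Matrix.mulVec_mulVec, ih, oneLevel_mulVec]
    funext p
    by_cases h1 : p = j <;> simp [h1, pow_succ] <;> ring

lemma sums_from_norm {k : ℕ} {v : Fin n → ℂ} {w : Fin n → Zw}
    (hw : ∀ i, (Real.sqrt 2 : ℂ)^k * v i = (w i).toC)
    (hnorm : ∑ i, v i * (starRingEnd ℂ) (v i) = 1) :
    (∑ i, (w i).p) = 2^k ∧ (∑ i, (w i).q) = 0 := by
  have hC : ∑ i, ((w i).toC * (starRingEnd ℂ) ((w i).toC)) = (2:ℂ)^k := by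
    have : ∀ i, (w i).toC * (starRingEnd ℂ) ((w i).toC)
        = (2:ℂ)^k * (v i * (starRingEnd ℂ) (v i)) := by
      intro i
      rw [← hw i, _root_.map_mul, map_pow, Complex.conj_ofReal,
        show (Real.sqrt 2:ℂ)^k * v i * ((Real.sqrt 2:ℂ)^k * (starRingEnd ℂ) (v i))
          = ((Real.sqrt 2:ℂ)^2)^k * (v i * (starRingEnd ℂ) (v i)) from by ring, sqrt2_sq]
    rw [Finset.sum_congr rfl (fun i _ => this i), ← Finset.mul_sum, hnorm, mul_one]
  have hC2 : ((∑ i, (w i).p : ℤ) : ℂ) + ((∑ i, (w i).q : ℤ) : ℂ) * (Real.sqrt 2 : ℂ)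
      = (2:ℂ)^k := by
    rw [← hC, Finset.sum_congr rfl (fun i _ => Zw.normsq (w i))]
    push_cast
    rw [Finset.sum_add_distrib, Finset.sum_mul]
  set P : ℤ := ∑ i, (w i).p with hP
  set Q : ℤ := ∑ i, (w i).q with hQ
  have hr : (P : ℝ) + (Q : ℝ) * Real.sqrt 2 = (2:ℝ)^k := by
    apply Complex.ofReal_injective
    push_cast
    exact_mod_cast hC2
  have hQ0 : Q = 0 := by
    by_contra hQne
    apply irrational_sqrt_two
    refine ⟨((2^k - P : ℤ) : ℚ) / (Q : ℚ), ?_⟩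
    have hQR : (Q : ℝ) ≠ 0 := Int.cast_ne_zero.mpr hQne
    push_cast
    rw [div_eq_iff hQR]
    linarith [hr]
  have hP0 : (P : ℝ) = (2:ℝ)^k := by
    rw [hQ0] at hr
    push_cast at hr
    linarith
  constructor
  · exact_mod_cast hP0
  · exact hQ0

lemma card_filter_mod {w : Fin n → Zw} (PZ : Zw → Prop) [DecidablePred PZ]
    (f : Zw → ℤ) (hf : ∀ t, f t % 2 = if PZ t then 1 else 0) :
    ((∑ i, f (w i)) % 2 : ℤ) = ((Finset.univ.filter (fun i => PZ (w i))).card : ℤ) % 2 := by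
  rw [Finset.sum_int_mod]
  rw [Finset.sum_congr rfl (fun i _ => hf (w i))]
  rw [Finset.sum_boole]
  try simp

end Glue
section Col

open Matrix Zw

variable {n : ℕ}

lemma p_mod_ite (t : Zw) : t.p % 2 = if Zw.OddT t then 1 else 0 := by
  have hp := Zw.p_parity t
  split_ifs with h
  · unfold Zw.OddT at h; omega
  · unfold Zw.OddT at h; omega

lemma q_mod_ite (t : Zw) : t.q % 2 = if Zw.E2T t then 1 else 0 := by
  have hq := Zw.q_parity t
  split_ifs with h
  · exact hq.mpr h
  · have h1 : ¬ (t.q % 2 = 1) := fun hh => h (hq.mp hh)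
    omega

lemma toC_zero_p {t : Zw} (h : t.toC = 0) : t.p = 0 := by
  have h1 := Zw.normsq t
  rw [h, zero_mul] at h1
  have hr : ((t.p : ℝ) + (t.q : ℝ) * Real.sqrt 2 : ℝ) = 0 := by
    apply Complex.ofReal_injective
    push_cast
    exact_mod_cast h1.symm
  have hq0 : t.q = 0 := by
    by_contra hQne
    apply irrational_sqrt_two
    refine ⟨((-t.p : ℤ) : ℚ) / (t.q : ℚ), ?_⟩
    have hQR : ((t.q : ℤ) : ℝ) ≠ 0 := Int.cast_ne_zero.mpr hQne
    push_cast
    rw [div_eq_iff hQR]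
    linarith [hr]
  rw [hq0] at hr
  push_cast at hr
  norm_num at hr
  exact_mod_cast hr

lemma omega_ne_zero : ω ≠ 0 := by
  intro h
  have := conj_omega_mul
  rw [h] at this
  simp at this

lemma v_ne_zero_of_p {k : ℕ} {v : Fin n → ℂ} {w : Fin n → Zw}
    (hw : ∀ i, (Real.sqrt 2 : ℂ)^k * v i = (w i).toC) {r : Fin n}
    (hp : (w r).p ≠ 0) : v r ≠ 0 := by
  intro h0
  apply hp
  apply toC_zero_p
  rw [← hw r, h0, mul_zero]

lemma filter_update_two {w w' : Fin n → Zw} {P : Zw → Prop} [DecidablePred P]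
    {i1 i2 : Fin n} (hne : i1 ≠ i2) (hupd : ∀ r, r ≠ i1 → r ≠ i2 → w' r = w r)
    (h1 : ¬ P (w' i1)) (h2 : ¬ P (w' i2)) :
    Finset.univ.filter (fun i => P (w' i))
      = ((Finset.univ.filter (fun i => P (w i))).erase i1).erase i2 := by
  ext r
  simp only [Finset.mem_filter, Finset.mem_erase, Finset.mem_univ, true_and]
  constructor
  · intro hr
    have hri1 : r ≠ i1 := fun h => h1 (h ▸ hr)
    have hri2 : r ≠ i2 := fun h => h2 (h ▸ hr)
    exact ⟨hri2, hri1, by rw [← hupd r hri1 hri2]; exact hr⟩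
  · rintro ⟨hri2, hri1, hr⟩
    rw [hupd r hri1 hri2]
    exact hr

lemma card_two_erase {s : Finset (Fin n)} {i1 i2 : Fin n}
    (h1 : i1 ∈ s) (h2 : i2 ∈ s) (hne : i1 ≠ i2) :
    ((s.erase i1).erase i2).card = s.card - 2 := by
  rw [Finset.card_erase_of_mem (Finset.mem_erase.mpr ⟨Ne.symm hne, h2⟩),
    Finset.card_erase_of_mem h1]
  omega

/-- The termination measure of the inner induction. -/
def measureZ (n : ℕ) (w : Fin n → Zw) : ℕ :=
  (n+1) * (Finset.univ.filter (fun i => Zw.OddT (w i))).card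
    + (Finset.univ.filter (fun i => Zw.E2T (w i))).card

lemma measure_step (N O E E' : ℕ) (hE' : E' ≤ N) (hO : 2 ≤ O) :
    (N+1) * (O - 2) + E' < (N+1) * O + E := by
  obtain ⟨X, hX⟩ : ∃ X, (N+1) * (O - 2) = X := ⟨_, rfl⟩
  obtain ⟨Y, hY⟩ : ∃ Y, (N+1) * O = Y := ⟨_, rfl⟩
  have h1 : X + (N+1) * 2 = Y := by
    rw [← hX, ← hY, ← Nat.mul_add]
    congr 1
    omega
  omega

lemma _root_.Zw.p_zero_coords (t : Zw) (h : t.p = 0) :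
    t.a = 0 ∧ t.b = 0 ∧ t.c = 0 ∧ t.d = 0 := by
  unfold Zw.p at h
  refine ⟨?_, ?_, ?_, ?_⟩ <;>
    nlinarith [sq_nonneg t.a, sq_nonneg t.b, sq_nonneg t.c, sq_nonneg t.d]

lemma pair_step (j : Fin n) (k : ℕ) (v : Fin n → ℂ) (w : Fin n → Zw)
    (hw : ∀ i, (Real.sqrt 2 : ℂ)^(k+1) * v i = (w i).toC)
    (hnorm : (∑ i, v i * (starRingEnd ℂ) (v i)) = 1)
    (hsupp : ∀ i : Fin n, (i:ℕ) < (j:ℕ) → v i = 0)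
    (i1 i2 : Fin n) (hne12 : i1 ≠ i2)
    (hge1 : (j:ℕ) ≤ (i1:ℕ)) (hge2 : (j:ℕ) ≤ (i2:ℕ))
    (m : ℕ) (z₁ z₂ : Zw)
    (hz₁ : (w i1).add (Zw.wpow m (w i2)) = z₁.s2)
    (hz₂ : (w i1).sub (Zw.wpow m (w i2)) = z₂.s2) :
    ∃ (L0 : List (Matrix (Fin n) (Fin n) ℂ)) (v' : Fin n → ℂ) (w' : Fin n → Zw),
      (∀ M ∈ L0, IsLevelGen M ∧ GoodUpTo (j:ℕ) M) ∧
      (∀ i, (Real.sqrt 2 : ℂ)^(k+1) * v' i = (w' i).toC) ∧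
      (∑ i, v' i * (starRingEnd ℂ) (v' i)) = 1 ∧
      (∀ i : Fin n, (i:ℕ) < (j:ℕ) → v' i = 0) ∧
      w' i1 = z₁ ∧ w' i2 = z₂ ∧ (∀ r, r ≠ i1 → r ≠ i2 → w' r = w r) ∧
      L0.prod.mulVec v = v' := by
  set L0 : List (Matrix (Fin n) (Fin n) ℂ) :=
    twoLevel Hmat i1 i2 :: List.replicate m (twoLevel Tmat i1 i2) with hL0
  set v' := L0.prod.mulVec v with hv'def
  set w' : Fin n → Zw := fun r => if r = i1 then z₁ else if r = i2 then z₂ else w r with hw'def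
  have hL0gen : ∀ M ∈ L0, IsLevelGen M ∧ GoodUpTo (j:ℕ) M := by
    intro M hM
    rcases List.mem_cons.mp hM with h | h
    · subst h
      exact ⟨Or.inl ⟨i1, i2, hne12, Or.inr (Or.inl rfl)⟩,
        goodUpTo_twoLevel _ _ _ hge1 hge2⟩
    · rw [List.eq_of_mem_replicate h]
      exact ⟨Or.inl ⟨i1, i2, hne12, Or.inr (Or.inr rfl)⟩,
        goodUpTo_twoLevel _ _ _ hge1 hge2⟩
  have hvform : v' = fun p =>
      if p = i1 then ((Real.sqrt 2:ℂ))⁻¹ * (v i1 + ω^m * v i2)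
      else if p = i2 then ((Real.sqrt 2:ℂ))⁻¹ * (v i1 - ω^m * v i2)
      else v p := by
    rw [hv'def, hL0, List.prod_cons, ← Matrix.mulVec_mulVec,
      replicate_T_mulVec _ _ _ hne12, Hstep_mulVec _ _ hne12]
    funext p
    by_cases h1 : p = i1
    · subst h1
      simp [hne12, Ne.symm hne12]
    · by_cases h2 : p = i2
      · subst h2
        simp [h1, hne12, Ne.symm hne12]
      · simp [h1, h2]
  have hv'1 : v' i1 = ((Real.sqrt 2:ℂ))⁻¹ * (v i1 + ω^m * v i2) := by
    rw [hvform]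
    simp
  have hv'2 : v' i2 = ((Real.sqrt 2:ℂ))⁻¹ * (v i1 - ω^m * v i2) := by
    rw [hvform]
    simp [Ne.symm hne12]
  have hv'o : ∀ p, p ≠ i1 → p ≠ i2 → v' p = v p := by
    intro p h1 h2
    rw [hvform]
    simp [h1, h2]
  have key : ∀ (z : Zw) (sgn : ℂ), (w i1).toC + sgn * (Zw.wpow m (w i2)).toC = z.s2.toC →
      (Real.sqrt 2:ℂ)^(k+1) * (((Real.sqrt 2:ℂ))⁻¹ * (v i1 + sgn * (ω^m * v i2))) = z.toC := by
    intro z sgn hzz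
    have h1 : (Real.sqrt 2:ℂ)^(k+1) * (v i1 + sgn * (ω^m * v i2))
        = (Real.sqrt 2:ℂ) * z.toC := by
      calc (Real.sqrt 2:ℂ)^(k+1) * (v i1 + sgn * (ω^m * v i2))
          = ((Real.sqrt 2:ℂ)^(k+1) * v i1)
            + sgn * (ω^m * ((Real.sqrt 2:ℂ)^(k+1) * v i2)) := by ring
        _ = (w i1).toC + sgn * (Zw.wpow m (w i2)).toC := by
            rw [hw i1, hw i2, Zw.toC_wpow]
        _ = z.s2.toC := hzz
        _ = (Real.sqrt 2:ℂ) * z.toC := Zw.toC_s2 z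
    calc (Real.sqrt 2:ℂ)^(k+1) * (((Real.sqrt 2:ℂ))⁻¹ * (v i1 + sgn * (ω^m * v i2)))
        = ((Real.sqrt 2:ℂ))⁻¹ * ((Real.sqrt 2:ℂ)^(k+1) * (v i1 + sgn * (ω^m * v i2))) := by
          ring
      _ = ((Real.sqrt 2:ℂ))⁻¹ * ((Real.sqrt 2:ℂ) * z.toC) := by rw [h1]
      _ = z.toC := by rw [← mul_assoc, inv_mul_cancel₀ sqrt2_ne, one_mul]
  have hwi1 : w' i1 = z₁ := by rw [hw'def]; simp
  have hwi2 : w' i2 = z₂ := by rw [hw'def]; simp [Ne.symm hne12]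
  have hw' : ∀ i, (Real.sqrt 2 : ℂ)^(k+1) * v' i = (w' i).toC := by
    intro i
    by_cases h1 : i = i1
    · rw [h1, hv'1, hwi1,
        show (v i1 + ω^m * v i2) = (v i1 + 1 * (ω^m * v i2)) from by ring]
      exact key z₁ 1 (by rw [one_mul, ← Zw.toC_add, hz₁])
    · by_cases h2 : i = i2
      · rw [h2, hv'2, hwi2,
          show (v i1 - ω^m * v i2) = (v i1 + (-1) * (ω^m * v i2)) from by ring]
        refine key z₂ (-1) ?_
        rw [← hz₂, Zw.toC_sub]
        ring
      · rw [hv'o i h1 h2, hw'def]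
        simp only [if_neg h1, if_neg h2]
        exact hw i
  have hnorm' : (∑ i, v' i * (starRingEnd ℂ) (v' i)) = 1 := by
    rw [hv'def, norm_mulVec (listProd_unitary L0 (fun M hM => (hL0gen M hM).1)) v]
    exact hnorm
  have hsupp' : ∀ i : Fin n, (i:ℕ) < (j:ℕ) → v' i = 0 := by
    intro i hi
    rw [hv'o i (fun he => by rw [he] at hi; omega) (fun he => by rw [he] at hi; omega)]
    exact hsupp i hi
  refine ⟨L0, v', w', hL0gen, hw', hnorm', hsupp', hwi1, hwi2, ?_, rfl⟩
  intro r h1 h2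
  rw [hw'def]
  simp only [if_neg h1, if_neg h2]

/-- Column reduction: a unit column with entries in `𝔻[ω]`, supported on indices `≥ j`,
can be reduced to `e_j` by one- and two-level generators acting only on indices `≥ j`. -/
lemma col_reduce (j : Fin n) :
    ∀ (k : ℕ) (v : Fin n → ℂ) (w : Fin n → Zw),
      (∀ i, (Real.sqrt 2 : ℂ)^k * v i = (w i).toC) →
      (∑ i, v i * (starRingEnd ℂ) (v i)) = 1 →
      (∀ i : Fin n, (i:ℕ) < (j:ℕ) → v i = 0) →
      ∃ L : List (Matrix (Fin n) (Fin n) ℂ),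
        (∀ M ∈ L, IsLevelGen M ∧ GoodUpTo (j:ℕ) M) ∧
        L.prod.mulVec v = fun p => if p = j then 1 else 0 := by
  intro k
  induction k with
  | zero =>
    intro v w hw hnorm hsupp
    simp only [pow_zero, one_mul] at hw
    obtain ⟨hP, hQ⟩ := sums_from_norm (k := 0) (by simpa using hw) hnorm
    rw [pow_zero] at hP
    -- find the unique nonzero entry
    have hex : ∃ i₀, (w i₀).p ≠ 0 := by
      by_contra hc
      push_neg at hc
      rw [Finset.sum_eq_zero (fun i _ => hc i)] at hP
      norm_num at hP
    obtain ⟨i₀, hi₀⟩ := hex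
    have hsum2 : (w i₀).p + ∑ r ∈ Finset.univ.erase i₀, (w r).p = 1 := by
      rw [← hP]
      exact Finset.add_sum_erase Finset.univ (fun i => (w i).p) (Finset.mem_univ i₀)
    have herase0 : ∑ r ∈ Finset.univ.erase i₀, (w r).p = 0 ∧ (w i₀).p = 1 := by
      have hnn : 0 ≤ ∑ r ∈ Finset.univ.erase i₀, (w r).p :=
        Finset.sum_nonneg (fun r _ => Zw.p_nonneg (w r))
      have h1 : 1 ≤ (w i₀).p := by
        have := Zw.p_nonneg (w i₀); omega
      constructor <;> omega
    have hothers : ∀ r, r ≠ i₀ → v r = 0 := by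
      intro r hr
      have hr0 : (w r).p = 0 :=
        (Finset.sum_eq_zero_iff_of_nonneg (fun r _ => Zw.p_nonneg (w r))).mp herase0.1 r
          (Finset.mem_erase.mpr ⟨hr, Finset.mem_univ r⟩)
      rw [hw r]
      exact Zw.toC_eq_zero_of_p _ hr0
    obtain ⟨m, hm⟩ := Zw.unit_of_p_eq_one _ herase0.2
    have hv₀ : v i₀ = ω ^ m := by rw [hw i₀, hm]
    have hωm : ω ^ m ≠ 0 := pow_ne_zero _ omega_ne_zero
    have hji₀ : (j:ℕ) ≤ (i₀:ℕ) := by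
      by_contra hc
      exact hωm (by rw [← hv₀]; exact hsupp i₀ (by omega))
    have hpow : ω ^ (7*m) * ω ^ m = 1 := by
      rw [← pow_add, show 7*m + m = 8*m from by omega, pow_mul, omega_pow8, one_pow]
    by_cases hij : i₀ = j
    · subst hij
      refine ⟨List.replicate (7*m) (oneLevel ω i₀), ?_, ?_⟩
      · intro M hM
        rw [List.eq_of_mem_replicate hM]
        exact ⟨Or.inr ⟨i₀, rfl⟩, goodUpTo_oneLevel _ _ le_rfl⟩
      · rw [replicate_omega_mulVec]
        funext p
        beta_reduce
        by_cases hp : p = i₀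
        · rw [hp, if_pos rfl, if_pos rfl, hv₀]
          exact hpow
        · rw [if_neg hp, if_neg hp]
          exact hothers p hp
    · have hjne : j ≠ i₀ := fun he => hij he.symm
      refine ⟨List.replicate (7*m) (oneLevel ω j) ++ [twoLevel Xmat j i₀], ?_, ?_⟩
      · intro M hM
        rcases List.mem_append.mp hM with h | h
        · rw [List.eq_of_mem_replicate h]
          exact ⟨Or.inr ⟨j, rfl⟩, goodUpTo_oneLevel _ _ le_rfl⟩
        · rw [List.mem_singleton.mp h]
          exact ⟨Or.inl ⟨j, i₀, hjne, Or.inl rfl⟩,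
            goodUpTo_twoLevel _ _ _ le_rfl hji₀⟩
      · rw [List.prod_append, List.prod_singleton, ← Matrix.mulVec_mulVec,
          Xswap_mulVec _ _ hjne, replicate_omega_mulVec]
        funext p
        beta_reduce
        by_cases hp : p = j
        · rw [hp, if_pos rfl, if_pos rfl, if_pos rfl, hv₀]
          exact hpow
        · rw [if_neg hp, if_neg hp, if_neg hp]
          by_cases hpi : p = i₀
          · rw [hpi, if_pos rfl]
            exact hothers j hjne
          · rw [if_neg hpi]
            exact hothers p hpi
  | succ k ih =>
    have main : ∀ N : ℕ, ∀ (v : Fin n → ℂ) (w : Fin n → Zw),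
        (∀ i, (Real.sqrt 2 : ℂ)^(k+1) * v i = (w i).toC) →
        (∑ i, v i * (starRingEnd ℂ) (v i)) = 1 →
        (∀ i : Fin n, (i:ℕ) < (j:ℕ) → v i = 0) →
        measureZ n w ≤ N →
        ∃ L : List (Matrix (Fin n) (Fin n) ℂ),
          (∀ M ∈ L, IsLevelGen M ∧ GoodUpTo (j:ℕ) M) ∧
          L.prod.mulVec v = fun p => if p = j then 1 else 0 := by
      intro N
      induction N using Nat.strong_induction_on with
      | _ N ihN =>
      intro v w hw hnorm hsupp hmeas
      obtain ⟨hP, hQ⟩ := sums_from_norm hw hnorm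
      by_cases hO : (Finset.univ.filter (fun i => Zw.OddT (w i))).Nonempty
      · -- step pairing two odd entries
        obtain ⟨i1, hi1⟩ := hO
        have hOcard2 : (Finset.univ.filter (fun i => Zw.OddT (w i))).card % 2 = 0 := by
          have hmod := card_filter_mod (w := w) Zw.OddT Zw.p p_mod_ite
          rw [hP] at hmod
          have h2 : ((2:ℤ)^(k+1)) % 2 = 0 := by
            rw [show ((2:ℤ))^(k+1) = 2 * 2^k from by rw [pow_succ]; ring]
            exact Int.mul_emod_right _ _
          omega
        have h2card : 1 < (Finset.univ.filter (fun i => Zw.OddT (w i))).card := by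
          have h0 : 0 < (Finset.univ.filter (fun i => Zw.OddT (w i))).card :=
            Finset.card_pos.mpr ⟨i1, hi1⟩
          omega
        obtain ⟨i2, hi2, hne21⟩ := Finset.exists_mem_ne h2card i1
        have hodd1 : Zw.OddT (w i1) := (Finset.mem_filter.mp hi1).2
        have hodd2 : Zw.OddT (w i2) := (Finset.mem_filter.mp hi2).2
        have hne12 : i1 ≠ i2 := Ne.symm hne21
        have hge : ∀ r, Zw.OddT (w r) → (j:ℕ) ≤ (r:ℕ) := by
          intro r hr
          by_contra hc
          have hv0 : v r = 0 := hsupp r (by omega)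
          have hp0 : (w r).p ≠ 0 := by
            have := p_mod_ite (w r)
            rw [if_pos hr] at this
            omega
          exact v_ne_zero_of_p hw hp0 hv0
        obtain ⟨m, z₁, z₂, hz₁, hz₂, hnz₁, hnz₂⟩ := Zw.Opair (w i1) (w i2) hodd1 hodd2
        obtain ⟨L0, v', w', hL0gen, hw', hnorm', hsupp', hwi1, hwi2, hupd, hact⟩ :=
          pair_step j k v w hw hnorm hsupp i1 i2 hne12 (hge _ hodd1) (hge _ hodd2)
            m z₁ z₂ hz₁ hz₂
        have hOw' : Finset.univ.filter (fun i => Zw.OddT (w' i))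
            = ((Finset.univ.filter (fun i => Zw.OddT (w i))).erase i1).erase i2 :=
          filter_update_two hne12 hupd (hwi1 ▸ hnz₁) (hwi2 ▸ hnz₂)
        have hmeas' : measureZ n w' < measureZ n w := by
          unfold measureZ
          rw [hOw', card_two_erase hi1 hi2 hne12]
          have hE' : (Finset.univ.filter (fun i => Zw.E2T (w' i))).card ≤ n := by
            calc (Finset.univ.filter (fun i => Zw.E2T (w' i))).card
                ≤ Finset.univ.card := Finset.card_filter_le _ _
              _ = n := by rw [Finset.card_univ, Fintype.card_fin]
          have := measure_step n (Finset.univ.filter (fun i => Zw.OddT (w i))).card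
            (Finset.univ.filter (fun i => Zw.E2T (w i))).card
            (Finset.univ.filter (fun i => Zw.E2T (w' i))).card hE' (by omega)
          omega
        obtain ⟨L1, hL1gen, hL1act⟩ := ihN (measureZ n w')
          (lt_of_lt_of_le hmeas' hmeas) v' w' hw' hnorm' hsupp' le_rfl
        refine ⟨L1 ++ L0, ?_, ?_⟩
        · intro M hM
          rcases List.mem_append.mp hM with h | h
          · exact hL1gen M h
          · exact hL0gen M h
        · rw [List.prod_append, ← Matrix.mulVec_mulVec, hact]
          exact hL1act
      · by_cases hE : (Finset.univ.filter (fun i => Zw.E2T (w i))).Nonempty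
        · -- step pairing two E2 entries
          obtain ⟨i1, hi1⟩ := hE
          have hEcard2 : (Finset.univ.filter (fun i => Zw.E2T (w i))).card % 2 = 0 := by
            have hmod := card_filter_mod (w := w) Zw.E2T Zw.q q_mod_ite
            rw [hQ] at hmod
            omega
          have h2card : 1 < (Finset.univ.filter (fun i => Zw.E2T (w i))).card := by
            have h0 : 0 < (Finset.univ.filter (fun i => Zw.E2T (w i))).card :=
              Finset.card_pos.mpr ⟨i1, hi1⟩
            omega
          obtain ⟨i2, hi2, hne21⟩ := Finset.exists_mem_ne h2card i1
          have he1 : Zw.E2T (w i1) := (Finset.mem_filter.mp hi1).2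
          have he2 : Zw.E2T (w i2) := (Finset.mem_filter.mp hi2).2
          have hne12 : i1 ≠ i2 := Ne.symm hne21
          have hge : ∀ r, Zw.E2T (w r) → (j:ℕ) ≤ (r:ℕ) := by
            intro r hr
            by_contra hc
            have hv0 : v r = 0 := hsupp r (by omega)
            have hp0 : (w r).p ≠ 0 := by
              intro hp
              obtain ⟨ha, hb, hc', hd⟩ := Zw.p_zero_coords _ hp
              unfold Zw.E2T at hr
              omega
            exact v_ne_zero_of_p hw hp0 hv0
          obtain ⟨m, z₁, z₂, hz₁, hz₂, hev₁, hev₂⟩ := Zw.E2pair (w i1) (w i2) he1 he2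
          obtain ⟨L0, v', w', hL0gen, hw', hnorm', hsupp', hwi1, hwi2, hupd, hact⟩ :=
            pair_step j k v w hw hnorm hsupp i1 i2 hne12 (hge _ he1) (hge _ he2)
              m z₁ z₂ hz₁ hz₂
          have hEw' : Finset.univ.filter (fun i => Zw.E2T (w' i))
              = ((Finset.univ.filter (fun i => Zw.E2T (w i))).erase i1).erase i2 :=
            filter_update_two hne12 hupd (hwi1 ▸ Zw.even2_not_e2T hev₁)
              (hwi2 ▸ Zw.even2_not_e2T hev₂)
          have hOw0 : (Finset.univ.filter (fun i => Zw.OddT (w i))) = ∅ :=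
            Finset.not_nonempty_iff_eq_empty.mp hO
          have hOw' : (Finset.univ.filter (fun i => Zw.OddT (w' i))) = ∅ := by
            rw [Finset.filter_eq_empty_iff]
            intro r _
            by_cases h1 : r = i1
            · subst h1; rw [hwi1]; exact Zw.even2_not_oddT hev₁
            · by_cases h2 : r = i2
              · subst h2; rw [hwi2]; exact Zw.even2_not_oddT hev₂
              · rw [hupd r h1 h2]
                exact Finset.filter_eq_empty_iff.mp hOw0 (Finset.mem_univ r)
          have hmeas' : measureZ n w' < measureZ n w := by
            unfold measureZ
            rw [hOw', hOw0, hEw', card_two_erase hi1 hi2 hne12]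
            simp only [Finset.card_empty, Nat.mul_zero, Nat.zero_add]
            omega
          obtain ⟨L1, hL1gen, hL1act⟩ := ihN (measureZ n w')
            (lt_of_lt_of_le hmeas' hmeas) v' w' hw' hnorm' hsupp' le_rfl
          refine ⟨L1 ++ L0, ?_, ?_⟩
          · intro M hM
            rcases List.mem_append.mp hM with h | h
            · exact hL1gen M h
            · exact hL0gen M h
          · rw [List.prod_append, ← Matrix.mulVec_mulVec, hact]
            exact hL1act
        · -- all entries divisible by √2 : drop k
          have hOw0 := Finset.not_nonempty_iff_eq_empty.mp hO
          have hEw0 := Finset.not_nonempty_iff_eq_empty.mp hE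
          have hall : ∀ i, Zw.Even2 (w i) := by
            intro i
            exact Zw.not_oddT_not_e2T
              (Finset.filter_eq_empty_iff.mp hOw0 (Finset.mem_univ i))
              (Finset.filter_eq_empty_iff.mp hEw0 (Finset.mem_univ i))
          choose s hs using fun i => Zw.even2_s2 _ (hall i)
          have hw2 : ∀ i, (Real.sqrt 2 : ℂ)^k * v i = (s i).toC := by
            intro i
            have h1 := hw i
            rw [hs i, Zw.toC_s2] at h1
            rw [show (Real.sqrt 2:ℂ)^(k+1) * v i
              = (Real.sqrt 2:ℂ) * ((Real.sqrt 2:ℂ)^k * v i) from by rw [pow_succ]; ring] at h1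
            exact mul_left_cancel₀ sqrt2_ne h1
          exact ih v s hw2 hnorm hsupp
    intro v w hw hnorm hsupp
    exact main (measureZ n w) v w hw hnorm hsupp le_rfl
section Outer

open Matrix

variable {n : ℕ}

lemma reduce_all (n : ℕ) :
    ∀ d : ℕ, ∀ (m : ℕ) (U : Matrix (Fin n) (Fin n) ℂ),
      n - m ≤ d →
      U ∈ Matrix.unitaryGroup (Fin n) ℂ →
      (∀ p q, inD2 (U p q)) →
      (∀ p q : Fin n, (q:ℕ) < m → U p q = if p = q then 1 else 0) →
      ∃ L : List (Matrix (Fin n) (Fin n) ℂ),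
        (∀ M ∈ L, IsLevelGen M) ∧ L.prod * U = 1 := by
  intro d
  induction d with
  | zero =>
    intro m U hd hU hent hcols
    refine ⟨[], by simp, ?_⟩
    rw [List.prod_nil, one_mul]
    ext p q
    rw [hcols p q (by omega), Matrix.one_apply]
  | succ d ihd =>
    intro m U hd hU hent hcols
    by_cases hm : n ≤ m
    · refine ⟨[], by simp, ?_⟩
      rw [List.prod_nil, one_mul]
      ext p q
      rw [hcols p q (by omega), Matrix.one_apply]
    · push_neg at hm
      set j : Fin n := ⟨m, hm⟩ with hj
      have hcol : ∀ r : Fin n, ∃ (kr : ℕ) (tr : Zw),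
          (Real.sqrt 2 : ℂ)^kr * U r j = tr.toC := fun r => hent r j
      choose kf tf hf using hcol
      set K := Finset.univ.sup kf with hK
      set w : Fin n → Zw := fun r => Zw.s2pow (K - kf r) (tf r) with hw_def
      have hw : ∀ r, (Real.sqrt 2 : ℂ)^K * (U r j) = (w r).toC := by
        intro r
        rw [hw_def]
        simp only
        rw [Zw.toC_s2pow, ← hf r, ← mul_assoc, ← pow_add]
        have hle : kf r ≤ K := Finset.le_sup (Finset.mem_univ r)
        congr 2
        omega
      have h1 : Uᴴ * U = 1 := Matrix.mem_unitaryGroup_iff'.mp hU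
      have hnorm : ∑ r, U r j * (starRingEnd ℂ) (U r j) = 1 := by
        have h2 : (Uᴴ * U) j j = 1 := by rw [h1, Matrix.one_apply_eq]
        rw [Matrix.mul_apply] at h2
        rw [← h2]
        apply Finset.sum_congr rfl
        intro r _
        rw [Matrix.conjTranspose_apply]
        exact (mul_comm _ _).trans rfl
      have hsupp : ∀ r : Fin n, (r:ℕ) < (j:ℕ) → U r j = 0 := by
        intro r hr
        have hrj : r ≠ j := by
          intro he
          rw [he] at hr
          omega
        have h2 : (Uᴴ * U) r j = 0 := by
          rw [h1, Matrix.one_apply, if_neg hrj]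
        rw [Matrix.mul_apply] at h2
        have h3 : ∀ s, Uᴴ r s * U s j = if s = r then U r j else 0 := by
          intro s
          rw [Matrix.conjTranspose_apply, hcols s r (by exact hr)]
          by_cases hs : s = r
          · subst hs
            rw [if_pos rfl, if_pos rfl, star_one, one_mul]
          · rw [if_neg hs, if_neg hs, star_zero, zero_mul]
        rw [Finset.sum_congr rfl (fun s _ => h3 s), Finset.sum_ite_eq',
          if_pos (Finset.mem_univ r)] at h2
        exact h2
      obtain ⟨L1, hL1, hL1act⟩ := col_reduce j K (fun r => U r j) w hw hnorm hsupp
      set U' := L1.prod * U with hU'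
      have hU'unit : U' ∈ Matrix.unitaryGroup (Fin n) ℂ :=
        mul_mem (listProd_unitary L1 (fun M hM => (hL1 M hM).1)) hU
      have hU'ent : ∀ p q, inD2 (U' p q) :=
        listProd_entries L1 (fun M hM => (hL1 M hM).1) U hent
      have hU'cols : ∀ p q : Fin n, (q:ℕ) < m + 1 → U' p q = if p = q then 1 else 0 := by
        intro p q hq
        by_cases hqm : (q:ℕ) < m
        · exact cols_preserved L1 (fun M hM => (hL1 M hM).2) U hcols p q hqm
        · have hqj : q = j := by
            apply Fin.ext
            simp only [hj]
            omega
          subst hqj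
          rw [hU', mul_apply_col]
          simpa using congrFun hL1act p
      have hd' : n - (m+1) ≤ d := by omega
      obtain ⟨L2, hL2, hL2act⟩ := ihd (m+1) U' hd' hU'unit hU'ent hU'cols
      refine ⟨L2 ++ L1, ?_, ?_⟩
      · intro M hM
        rcases List.mem_append.mp hM with h | h
        · exact hL2 M h
        · exact (hL1 M h).1
      · rw [List.prod_append, mul_assoc, ← hU']
        exact hL2act

lemma Xmat_sq : Xmat * Xmat = 1 := by
  ext i j
  fin_cases i <;> fin_cases j <;>
    simp [Xmat, Matrix.mul_apply, Fin.sum_univ_two, Matrix.one_apply]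

lemma Hmat_herm : Hmatᴴ = Hmat := by
  have hconj : (starRingEnd ℂ) ((Real.sqrt 2 : ℂ))⁻¹ = ((Real.sqrt 2 : ℂ))⁻¹ := by
    rw [← Complex.ofReal_inv, Complex.conj_ofReal]
  ext i j
  fin_cases i <;> fin_cases j <;>
    simp [Hmat, Matrix.conjTranspose_apply, hconj, smul_eq_mul]

lemma Hmat_sq : Hmat * Hmat = 1 := by
  have := Hmat_mul_self
  rwa [Hmat_herm] at this

lemma replicate_twoLevel_prod (A : Matrix (Fin 2) (Fin 2) ℂ) (j l : Fin n)
    (hjl : j ≠ l) (r : ℕ) :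
    (List.replicate r (twoLevel A j l)).prod = twoLevel (A ^ r) j l := by
  induction r with
  | zero =>
    rw [List.replicate, List.prod_nil, pow_zero, twoLevel_one _ _ hjl]
  | succ r ihr =>
    rw [List.replicate_succ, List.prod_cons, ihr, twoLevel_mul _ _ _ _ hjl, ← pow_succ']

lemma replicate_oneLevel_prod (a : ℂ) (j : Fin n) (r : ℕ) :
    (List.replicate r (oneLevel a j)).prod = oneLevel (a ^ r) j := by
  induction r with
  | zero =>
    rw [List.replicate, List.prod_nil, pow_zero, oneLevel_one]
  | succ r ihr =>
    rw [List.replicate_succ, List.prod_cons, ihr, oneLevel_mul, ← pow_succ']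

lemma Tmat_pow (r : ℕ) : Tmat ^ r = !![1, 0; 0, ω ^ r] := by
  induction r with
  | zero =>
    rw [pow_zero, pow_zero]
    ext i j
    fin_cases i <;> fin_cases j <;> simp [Matrix.one_apply]
  | succ r ihr =>
    rw [pow_succ, ihr]
    ext i j
    fin_cases i <;> fin_cases j <;>
      simp [Tmat, Matrix.mul_apply, Fin.sum_univ_two, pow_succ]

lemma Tmat_pow8 : Tmat ^ 8 = 1 := by
  rw [Tmat_pow, omega_pow8]
  ext i j
  fin_cases i <;> fin_cases j <;> simp [Matrix.one_apply]

lemma gen_inv {M : Matrix (Fin n) (Fin n) ℂ} (h : IsLevelGen M) :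
    ∃ L : List (Matrix (Fin n) (Fin n) ℂ),
      (∀ N ∈ L, IsLevelGen N) ∧ L.prod * M = 1 ∧ M * L.prod = 1 := by
  rcases h with ⟨j, l, hjl, hM | hM | hM⟩ | ⟨j, hM⟩
  · subst hM
    refine ⟨[twoLevel Xmat j l],
      fun N hN => by rw [List.mem_singleton.mp hN]; exact Or.inl ⟨j, l, hjl, Or.inl rfl⟩,
      ?_, ?_⟩ <;>
      rw [List.prod_singleton, twoLevel_mul _ _ _ _ hjl, Xmat_sq, twoLevel_one _ _ hjl]
  · subst hM
    refine ⟨[twoLevel Hmat j l],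
      fun N hN => by rw [List.mem_singleton.mp hN]; exact Or.inl ⟨j, l, hjl, Or.inr (Or.inl rfl)⟩,
      ?_, ?_⟩ <;>
      rw [List.prod_singleton, twoLevel_mul _ _ _ _ hjl, Hmat_sq, twoLevel_one _ _ hjl]
  · subst hM
    refine ⟨List.replicate 7 (twoLevel Tmat j l),
      fun N hN => by rw [List.eq_of_mem_replicate hN]; exact Or.inl ⟨j, l, hjl, Or.inr (Or.inr rfl)⟩,
      ?_, ?_⟩ <;>
      rw [replicate_twoLevel_prod _ _ _ hjl, twoLevel_mul _ _ _ _ hjl]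
    · rw [show Tmat^7 * Tmat = Tmat^8 from (pow_succ Tmat 7).symm, Tmat_pow8,
        twoLevel_one _ _ hjl]
    · rw [show Tmat * Tmat^7 = Tmat^8 from (pow_succ' Tmat 7).symm, Tmat_pow8,
        twoLevel_one _ _ hjl]
  · subst hM
    refine ⟨List.replicate 7 (oneLevel ω j),
      fun N hN => by rw [List.eq_of_mem_replicate hN]; exact Or.inr ⟨j, rfl⟩,
      ?_, ?_⟩ <;>
      rw [replicate_oneLevel_prod, oneLevel_mul]
    · rw [show ω^7 * ω = ω^8 from (pow_succ ω 7).symm, omega_pow8, oneLevel_one]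
    · rw [show ω * ω^7 = ω^8 from (pow_succ' ω 7).symm, omega_pow8, oneLevel_one]

lemma list_inv (L : List (Matrix (Fin n) (Fin n) ℂ)) (h : ∀ M ∈ L, IsLevelGen M) :
    ∃ L' : List (Matrix (Fin n) (Fin n) ℂ),
      (∀ N ∈ L', IsLevelGen N) ∧ L'.prod * L.prod = 1 ∧ L.prod * L'.prod = 1 := by
  induction L with
  | nil => exact ⟨[], by simp, by simp, by simp⟩
  | cons M L ihL =>
    obtain ⟨L', h1, h2, h3⟩ := ihL (fun N hN => h N (List.mem_cons_of_mem _ hN))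
    obtain ⟨LM, g1, g2, g3⟩ := gen_inv (h M List.mem_cons_self)
    refine ⟨L' ++ LM, ?_, ?_, ?_⟩
    · intro N hN
      rcases List.mem_append.mp hN with hh | hh
      · exact h1 N hh
      · exact g1 N hh
    · rw [List.prod_append, List.prod_cons, mul_assoc,
        ← mul_assoc LM.prod M L.prod, g2, one_mul, h2]
    · rw [List.prod_cons, List.prod_append, mul_assoc,
        ← mul_assoc L.prod L'.prod LM.prod, h3, one_mul, g3]

end Outer
/-- Matrix decomposition: every unitary `n×n` matrix with entries in `𝔻[ω]` is a finite
product of one- and two-level unitary matrices of types `X`, `H`, `T`, and `ω`. -/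
theorem stmt10 (n : ℕ) (U : Matrix (Fin n) (Fin n) ℂ)
    (hU : U ∈ Matrix.unitaryGroup (Fin n) ℂ)
    (hent : ∀ i j, inDω (U i j)) :
    ∃ L : List (Matrix (Fin n) (Fin n) ℂ),
      (∀ M ∈ L, IsLevelGen M) ∧ U = L.prod := by
  obtain ⟨L, hL, hact⟩ := reduce_all n n 0 U (by omega) hU
    (fun p q => inDω_inD2 (hent p q)) (fun p q hq => absurd hq (Nat.not_lt_zero _))
  obtain ⟨L', hL', h2, h3⟩ := list_inv L hL
  refine ⟨L', hL', ?_⟩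
  calc U = 1 * U := (one_mul U).symm
    _ = (L'.prod * L.prod) * U := by rw [h2]
    _ = L'.prod * (L.prod * U) := by rw [mul_assoc]
    _ = L'.prod * 1 := by rw [hact]
    _ = L'.prod := mul_one _
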